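/- Let θ be a 2×2 real matrix, D* : ℝ² → ℝ² a linear map with D* ∘ θ = θ ∘ D*, and ξ ∈ ℝ². For s ∈ ℝ set F_s := ∫₀ˢ exp(uD*) du and define φ_s : G_θ → G_θ by φ_s(t,v) = (t, exp(sD*)v + F_s Λ_t ξ). Then φ_0 is the identity map, each φ_s is a group automorphism of G_θ, and φ_{s₁+s₂} = φ_{s₁} ∘ φ_{s₂} for all s₁, s₂ ∈ ℝ; i.e., s ↦ φ_s is a one-parameter group of automorphisms of G_θ. -/

import Mathlib

open Matrix intervalIntegral

noncomputable section

attribute [local instance] Matrix.linftyOpNormedAddCommGroup Matrix.linftyOpNormedSpace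

/-- The matrix exponential of a `2 × 2` real matrix. -/
def expm (A : Matrix (Fin 2) (Fin 2) ℝ) : Matrix (Fin 2) (Fin 2) ℝ := NormedSpace.exp A

/-- `Λ_s = ∫₀ˢ exp(uθ) du`. -/
def Lam (θ : Matrix (Fin 2) (Fin 2) ℝ) (s : ℝ) : Matrix (Fin 2) (Fin 2) ℝ :=
  ∫ u in (0:ℝ)..s, expm (u • θ)

/-- Multiplication of the group `G_θ = ℝ ×_ρ ℝ²`. -/
def gmul (θ : Matrix (Fin 2) (Fin 2) ℝ) (p q : ℝ × (Fin 2 → ℝ)) : ℝ × (Fin 2 → ℝ) :=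
  (p.1 + q.1, p.2 + (expm (p.1 • θ)).mulVec q.2)

/-- The flow `φ_s(t,v) = (t, exp(sD*)v + F_sΛ_tξ)` of the linear vector field
`X(t,v) = (0, D*v + Λ_tξ)`, where `F_s = ∫₀ˢ exp(uD*) du`. -/
def flow (θ Dstar : Matrix (Fin 2) (Fin 2) ℝ) (ξ : Fin 2 → ℝ) (s : ℝ)
    (p : ℝ × (Fin 2 → ℝ)) : ℝ × (Fin 2 → ℝ) :=
  (p.1, (expm (s • Dstar)).mulVec p.2 + ((Lam Dstar s) * (Lam θ p.1)).mulVec ξ)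

attribute [local instance] Matrix.linftyOpNormedRing Matrix.linftyOpNormedAlgebra

instance : ENormedAddMonoid (Matrix (Fin 2) (Fin 2) ℝ) :=
  NormedAddCommGroup.toENormedAddCommMonoid.toENormedAddMonoid

lemma continuous_expm_smul (A : Matrix (Fin 2) (Fin 2) ℝ) :
    Continuous fun u : ℝ => expm (u • A) :=
  NormedSpace.exp_continuous.comp (continuous_id.smul continuous_const)

lemma expm_smul_add (A : Matrix (Fin 2) (Fin 2) ℝ) (a b : ℝ) :
    expm ((a + b) • A) = expm (a • A) * expm (b • A) := by
  erw [expm, add_smul, NormedSpace.exp_add_of_commute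
    (((Commute.refl A).smul_left a).smul_right b)]
  rfl

lemma Lam_add (A : Matrix (Fin 2) (Fin 2) ℝ) (a b : ℝ) :
    Lam A (a + b) = Lam A a + expm (a • A) * Lam A b := by
  have hc := continuous_expm_smul A
  have hi : ∀ x y : ℝ, IntervalIntegrable (fun u : ℝ => expm (u • A))
      MeasureTheory.volume x y := fun x y => hc.intervalIntegrable x y
  have h1 : Lam A (a + b) = Lam A a + ∫ u in a..(a + b), expm (u • A) := by
    rw [Lam, Lam, integral_add_adjacent_intervals (hi 0 a) (hi a (a + b))]
  have h2 : (∫ u in a..(a + b), expm (u • A)) = ∫ u in (0:ℝ)..b, expm ((u + a) • A) := by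
    rw [intervalIntegral.integral_comp_add_right (fun u => expm (u • A)) a, zero_add,
      add_comm a b]
  have h3 : (∫ u in (0:ℝ)..b, expm ((u + a) • A))
      = ∫ u in (0:ℝ)..b, expm (a • A) * expm (u • A) := by
    apply intervalIntegral.integral_congr
    intro u _
    dsimp only
    rw [add_comm u a, expm_smul_add]
  have h4 : (∫ u in (0:ℝ)..b, expm (a • A) * expm (u • A)) = expm (a • A) * Lam A b := by
    rw [Lam]
    exact (ContinuousLinearMap.mul ℝ _ (expm (a • A))).intervalIntegral_comp_comm (hi 0 b)
  rw [h1, h2, h3, h4]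

lemma Lam_comm_of_commute {A B : Matrix (Fin 2) (Fin 2) ℝ} (h : ∀ u : ℝ, Commute (expm (u • A)) B)
    (s : ℝ) : Lam A s * B = B * Lam A s := by
  have hc := continuous_expm_smul A
  have hi : IntervalIntegrable (fun u : ℝ => expm (u • A)) MeasureTheory.volume 0 s :=
    hc.intervalIntegrable 0 s
  have h1 : (∫ u in (0:ℝ)..s, expm (u • A) * B) = Lam A s * B :=
    ((ContinuousLinearMap.mul ℝ _).flip B).intervalIntegral_comp_comm hi
  have h2 : (∫ u in (0:ℝ)..s, B * expm (u • A)) = B * Lam A s :=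
    (ContinuousLinearMap.mul ℝ _ B).intervalIntegral_comp_comm hi
  rw [← h1, ← h2]
  apply intervalIntegral.integral_congr
  intro u _
  exact h u

/-- Let `D*` commute with `θ` and `ξ ∈ ℝ²`.  With `F_s = ∫₀ˢ exp(uD*) du`
(which is `Lam Dstar s`), the maps `φ_s(t,v) = (t, exp(sD*)v + F_sΛ_tξ)` form a one-parameter
group of automorphisms of `G_θ`: `φ_0 = id`, each `φ_s` is a (bijective) group homomorphism,
and `φ_{s₁+s₂} = φ_{s₁} ∘ φ_{s₂}`. -/
theorem flow_one_parameter_automorphisms (θ Dstar : Matrix (Fin 2) (Fin 2) ℝ)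
    (hcomm : Dstar * θ = θ * Dstar) (ξ : Fin 2 → ℝ) :
    flow θ Dstar ξ 0 = id ∧
    (∀ s : ℝ,
      (∀ p q : ℝ × (Fin 2 → ℝ),
        flow θ Dstar ξ s (gmul θ p q) = gmul θ (flow θ Dstar ξ s p) (flow θ Dstar ξ s q)) ∧
      Function.Bijective (flow θ Dstar ξ s)) ∧
    (∀ s₁ s₂ : ℝ, flow θ Dstar ξ (s₁ + s₂) = flow θ Dstar ξ s₁ ∘ flow θ Dstar ξ s₂) := by
  have hC : Commute Dstar θ := hcomm
  have hexpC : ∀ u t : ℝ, Commute (expm (u • Dstar)) (expm (t • θ)) := fun u t =>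
    ((hC.smul_left u).smul_right t).exp
  have hLamC : ∀ s t : ℝ, Lam Dstar s * expm (t • θ) = expm (t • θ) * Lam Dstar s := by
    intro s t
    exact Lam_comm_of_commute (fun u => hexpC u t) s
  -- φ₀ = id
  have h0 : flow θ Dstar ξ 0 = id := by
    funext p
    simp [flow, expm, Lam, NormedSpace.exp_zero, Matrix.one_mulVec]
  -- group law in s
  have hgrp : ∀ s₁ s₂ : ℝ, flow θ Dstar ξ (s₁ + s₂) = flow θ Dstar ξ s₁ ∘ flow θ Dstar ξ s₂ := by
    intro s₁ s₂
    funext p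
    simp only [flow, Function.comp_apply, expm_smul_add, Lam_add]
    refine Prod.ext rfl ?_
    simp only [Matrix.mulVec_add, Matrix.add_mulVec, Matrix.mulVec_mulVec, add_mul, mul_assoc]
    abel
  refine ⟨h0, fun s => ⟨?_, ?_⟩, hgrp⟩
  · -- homomorphism
    intro p q
    simp only [flow, gmul, Lam_add]
    refine Prod.ext rfl ?_
    simp only [Matrix.mulVec_add, mul_add, Matrix.add_mulVec, Matrix.mulVec_mulVec]
    rw [show Lam Dstar s * (expm (p.1 • θ) * Lam θ q.1)
        = expm (p.1 • θ) * (Lam Dstar s * Lam θ q.1) by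
      rw [← mul_assoc, hLamC s p.1, mul_assoc], (hexpC s p.1).eq]
    abel
  · -- bijective
    have hls : flow θ Dstar ξ (-s) ∘ flow θ Dstar ξ s = id := by
      rw [← hgrp, neg_add_cancel, h0]
    have hrs : flow θ Dstar ξ s ∘ flow θ Dstar ξ (-s) = id := by
      rw [← hgrp, add_neg_cancel, h0]
    exact Function.bijective_iff_has_inverse.mpr
      ⟨flow θ Dstar ξ (-s), congrFun hls, congrFun hrs⟩
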